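/- Let d ≥ 1 and let the Hermite heat kernel representation e^{-tH}f(x) = C_d (sinh 2t)^{-d/2} e^{-(tanh t/2)|x|²} ∫_{ℝ^d} e^{-|x-y|²/(2 sinh 2t)} e^{-(tanh t/2)|y|²} f(y) dy hold with constant C_d > 0. Let u₀(x) = α(−log|x|)^{1/p} 𝟙_{|x|<1} with α > 0, p > 1. Then there exists a constant C > 0 such that for all sufficiently small t > 0 and all x with √t/2 ≤ |x| ≤ √t, e^{-tH}u₀(x) ≥ C α (−log(4|x|))^{1/p}. -/

import Mathlib

open MeasureTheory Real ENNReal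

/-- The singular initial data `u₀(x) = α(−log|x|)^{1/p}` for `|x| < 1`, zero otherwise. -/
noncomputable def singularData {d : ℕ} (α p : ℝ)
    (x : EuclideanSpace ℝ (Fin d)) : ℝ :=
  if ‖x‖ < 1 then α * (-Real.log ‖x‖) ^ (1 / p) else 0

lemma integrable_ite_one : Integrable (fun s : ℝ => if |s| < 1 then (1:ℝ) else 0) := by
  have h : (fun s : ℝ => if |s| < 1 then (1:ℝ) else 0)
      = (Set.Ioo (-1:ℝ) 1).indicator (fun _ => (1:ℝ)) := by
    funext s
    by_cases h : |s| < 1 <;>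
      simp [Set.indicator_apply, Set.mem_Ioo, ← abs_lt, h]
  rw [h]
  exact (integrableOn_const measure_Ioo_lt_top.ne).integrable_indicator
    measurableSet_Ioo

lemma integrable_absRpowHalf :
    Integrable (fun s : ℝ => if |s| < 1 then |s| ^ (-(2:ℝ)⁻¹) else 0) := by
  have hr : (-1 : ℝ) < -(2:ℝ)⁻¹ := by norm_num
  have hpos : IntegrableOn (fun s : ℝ => |s| ^ (-(2:ℝ)⁻¹)) (Set.Ioc 0 1) := by
    have h : IntegrableOn (fun s : ℝ => s ^ (-(2:ℝ)⁻¹)) (Set.Ioc 0 1) :=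
      (intervalIntegral.intervalIntegrable_rpow' hr).1
    exact h.congr_fun (fun s hs => by rw [abs_of_pos hs.1]) measurableSet_Ioc
  have h01 : IntervalIntegrable (fun s : ℝ => |s| ^ (-(2:ℝ)⁻¹)) volume 0 1 :=
    (intervalIntegrable_iff_integrableOn_Ioc_of_le zero_le_one).mpr hpos
  have heq : (fun x : ℝ => |(-x)| ^ (-(2:ℝ)⁻¹)) = fun x : ℝ => |x| ^ (-(2:ℝ)⁻¹) :=
    funext fun x => by rw [abs_neg]
  have hneg : IntervalIntegrable (fun s : ℝ => |s| ^ (-(2:ℝ)⁻¹)) volume (-1) 0 := by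
    rw [IntervalIntegrable.iff_comp_neg]
    simp only [neg_neg, neg_zero]
    rw [heq]
    exact h01.symm
  have hunion : IntegrableOn (fun s : ℝ => |s| ^ (-(2:ℝ)⁻¹))
      (Set.Ioc (-1) 0 ∪ Set.Ioc 0 1) := hneg.1.union hpos
  have hIoo : IntegrableOn (fun s : ℝ => |s| ^ (-(2:ℝ)⁻¹)) (Set.Ioo (-1) 1) := by
    refine hunion.mono_set ?_
    intro s hs
    rcases le_or_gt s 0 with h | h
    · exact Or.inl ⟨hs.1, h⟩
    · exact Or.inr ⟨h, hs.2.le⟩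
  have h : (fun s : ℝ => if |s| < 1 then |s| ^ (-(2:ℝ)⁻¹) else 0)
      = (Set.Ioo (-1:ℝ) 1).indicator (fun s => |s| ^ (-(2:ℝ)⁻¹)) := by
    funext s
    by_cases h : |s| < 1 <;>
      simp [Set.indicator_apply, Set.mem_Ioo, ← abs_lt, h]
  rw [h]
  exact hIoo.integrable_indicator measurableSet_Ioo

lemma measurable_singularData {d : ℕ} (α p : ℝ) (hp : 1 < p) :
    Measurable (singularData (d := d) α p) := by
  unfold singularData
  have h1p : (0:ℝ) ≤ 1 / p := by positivity
  refine Measurable.ite (measurableSet_lt measurable_norm measurable_const) ?_ measurable_const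
  exact measurable_const.mul
    ((Real.continuous_rpow_const h1p).measurable.comp
      ((Real.measurable_log.comp measurable_norm).neg))

lemma singularData_nonneg {d : ℕ} {α p : ℝ} (hα : 0 < α)
    (y : EuclideanSpace ℝ (Fin d)) : 0 ≤ singularData α p y := by
  unfold singularData
  split_ifs with h
  · have : 0 ≤ -Real.log ‖y‖ := neg_nonneg.mpr (Real.log_nonpos (norm_nonneg y) h.le)
    exact mul_nonneg hα.le (Real.rpow_nonneg this _)
  · exact le_rfl

lemma rpow_inv_le_one_add {L p : ℝ} (hL : 0 ≤ L) (hp : 1 < p) :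
    L ^ (1 / p) ≤ 1 + L := by
  rcases le_total L 1 with h | h
  · calc L ^ (1/p) ≤ 1 := Real.rpow_le_one hL h (by positivity)
    _ ≤ 1 + L := by linarith
  · have h1 : 1 / p ≤ 1 := by rw [div_le_one (by linarith)]; linarith
    have h2 : L ^ (1/p) ≤ L ^ (1:ℝ) := Real.rpow_le_rpow_of_exponent_le h h1
    rw [Real.rpow_one] at h2
    linarith

lemma neg_log_le {r : ℝ} (hr : 0 < r) : -Real.log r ≤ 2 * r ^ (-(2:ℝ)⁻¹) := by
  have h1 : Real.log (r ^ (-(2:ℝ)⁻¹)) = (-(2:ℝ)⁻¹) * Real.log r := Real.log_rpow hr _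
  have h2 : Real.log (r ^ (-(2:ℝ)⁻¹)) ≤ r ^ (-(2:ℝ)⁻¹) - 1 :=
    Real.log_le_sub_one_of_pos (Real.rpow_pos_of_pos hr _)
  have h3 : (0:ℝ) ≤ r ^ (-(2:ℝ)⁻¹) := (Real.rpow_pos_of_pos hr _).le
  nlinarith [h1, h2, h3]

lemma integrable_singularData (d : ℕ) (hd : 1 ≤ d) (α p : ℝ) (hα : 0 < α) (hp : 1 < p) :
    Integrable (singularData (d := d) α p) := by
  have hd0 : 0 < d := hd
  set i0 : Fin d := ⟨0, hd0⟩ with hi0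
  set g : Fin d → ℝ → ℝ := fun i s =>
    if |s| < 1 then (if i = i0 then α * (1 + 2 * |s| ^ (-(2:ℝ)⁻¹)) else 1) else 0 with hg
  have hgnonneg : ∀ i s, 0 ≤ g i s := by
    intro i s
    simp only [hg]
    split_ifs
    · have : (0:ℝ) ≤ |s| ^ (-(2:ℝ)⁻¹) := Real.rpow_nonneg (abs_nonneg s) _
      positivity
    · norm_num
    · exact le_rfl
  have hgi : ∀ i, Integrable (g i) := by
    intro i
    by_cases h : i = i0
    · have heq : g i = fun s => α * ((if |s| < 1 then (1:ℝ) else 0)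
          + 2 * (if |s| < 1 then |s| ^ (-(2:ℝ)⁻¹) else 0)) := by
        funext s
        simp only [hg, h]
        split_ifs <;> ring
      rw [heq]
      exact ((integrable_ite_one.add (integrable_absRpowHalf.const_mul 2)).const_mul α)
    · have heq : g i = fun s => if |s| < 1 then (1:ℝ) else 0 := by
        funext s
        simp only [hg, h]
        split_ifs with h1 h2
        · exact h2.elim
        · rfl
        · rfl
      rw [heq]; exact integrable_ite_one
  have hG : Integrable (fun x : Fin d → ℝ => ∏ i, g i (x i)) := Integrable.fintype_prod hgi
  set e := (MeasurableEquiv.toLp 2 (Fin d → ℝ)).symm with he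
  have hmain : Integrable (fun x : Fin d → ℝ => singularData α p (e.symm x)) := by
    refine hG.mono' ?_ ?_
    · exact ((measurable_singularData α p hp).comp e.symm.measurable).aestronglyMeasurable
    · have hae : ∀ᵐ x : (Fin d → ℝ) ∂volume, x i0 ≠ 0 := by
        rw [volume_pi]
        exact MeasureTheory.Measure.ae_eval_ne _ i0 0
      filter_upwards [hae] with x hx
      set y : EuclideanSpace ℝ (Fin d) := e.symm x with hy
      have hyi : ∀ i, y i = x i := fun i => rfl
      have hcoord : ∀ i, |x i| ≤ ‖y‖ := by
        intro i
        rw [EuclideanSpace.norm_eq]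
        rw [show |x i| = √((x i)^2) from (Real.sqrt_sq_eq_abs _).symm]
        apply Real.sqrt_le_sqrt
        have : ∀ j, (0:ℝ) ≤ ‖y j‖ ^ 2 := fun j => sq_nonneg _
        calc (x i)^2 = ‖y i‖^2 := by rw [hyi i, Real.norm_eq_abs, sq_abs]
        _ ≤ ∑ j, ‖y j‖^2 := Finset.single_le_sum (fun j _ => this j) (Finset.mem_univ i)
      have hnorm : ‖singularData α p y‖ = singularData α p y :=
        Real.norm_of_nonneg (singularData_nonneg hα y)
      rw [hnorm]
      by_cases hlt : ‖y‖ < 1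
      · have hxi0 : 0 < |x i0| := abs_pos.mpr hx
        have hxi0lt : |x i0| < 1 := lt_of_le_of_lt (hcoord i0) hlt
        have hlogy : -Real.log ‖y‖ ≤ -Real.log |x i0| := by
          have := Real.log_le_log hxi0 (hcoord i0)
          linarith
        have hprod : ∏ i, g i (x i) = α * (1 + 2 * |x i0| ^ (-(2:ℝ)⁻¹)) := by
          have hterm : ∀ i, g i (x i)
              = if i = i0 then α * (1 + 2 * |x i0| ^ (-(2:ℝ)⁻¹)) else 1 := by
            intro i
            have hxilt : |x i| < 1 := lt_of_le_of_lt (hcoord i) hlt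
            simp only [hg, if_pos hxilt]
            by_cases h : i = i0
            · subst h; simp
            · simp [h]
          calc ∏ i, g i (x i)
              = ∏ i, (if i = i0 then α * (1 + 2 * |x i0| ^ (-(2:ℝ)⁻¹)) else 1) :=
                Finset.prod_congr rfl (fun i _ => hterm i)
          _ = α * (1 + 2 * |x i0| ^ (-(2:ℝ)⁻¹)) := by
                rw [Finset.prod_ite_eq' Finset.univ i0
                  (fun _ => α * (1 + 2 * |x i0| ^ (-(2:ℝ)⁻¹)))]
                simp
        rw [hprod]
        have hL0 : 0 ≤ -Real.log ‖y‖ := neg_nonneg.mpr (Real.log_nonpos (norm_nonneg y) hlt.le)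
        have hstep : (-Real.log ‖y‖) ^ (1/p) ≤ 1 + 2 * |x i0| ^ (-(2:ℝ)⁻¹) := by
          calc (-Real.log ‖y‖) ^ (1/p) ≤ 1 + (-Real.log ‖y‖) := rpow_inv_le_one_add hL0 hp
          _ ≤ 1 + (-Real.log |x i0|) := by linarith
          _ ≤ 1 + 2 * |x i0| ^ (-(2:ℝ)⁻¹) := by linarith [neg_log_le hxi0]
        unfold singularData
        rw [if_pos hlt]
        exact mul_le_mul_of_nonneg_left hstep hα.le
      · unfold singularData
        rw [if_neg hlt]
        exact Finset.prod_nonneg (fun i _ => hgnonneg i (x i))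
  have hmp := EuclideanSpace.volume_preserving_symm_measurableEquiv_toLp (Fin d)
  have := (hmp.integrable_comp_emb e.measurableEmbedding).mpr hmain
  have heq : (fun x : Fin d → ℝ => singularData α p (e.symm x)) ∘ e
      = singularData (d := d) α p := by
    funext z; simp
  rwa [heq] at this

lemma sinh_le_three_mul {s : ℝ} (hs : 0 ≤ s) (hs2 : s ≤ 1/2) : Real.sinh s ≤ 3 * s := by
  rw [Real.sinh_eq]
  have h1 : Real.exp (-(2*s)) ≥ 1 - 2*s := by
    have := Real.add_one_le_exp (-(2*s)); linarith
  have h2 : Real.exp (2*s) ≤ Real.exp 1 := Real.exp_le_exp.mpr (by linarith)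
  have h3 : Real.exp 1 < 2.7182818286 := Real.exp_one_lt_d9
  have h4 : Real.exp (2*s) * Real.exp (-(2*s)) = 1 := by
    rw [← Real.exp_add]; simp
  have h5 : Real.exp (-s) ≤ 1 := Real.exp_le_one_iff.mpr (by linarith)
  have h6 : Real.exp s - Real.exp (-s) = Real.exp (-s) * (Real.exp (2*s) - 1) := by
    rw [mul_sub, ← Real.exp_add]; ring_nf
  have h7 : Real.exp (2*s) - 1 ≤ 2*s * Real.exp (2*s) := by
    nlinarith [Real.exp_pos (2*s)]
  have h8 : 0 ≤ Real.exp (2*s) - 1 := by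
    have := Real.add_one_le_exp (2*s); linarith
  have h9 : 0 < Real.exp (-s) := Real.exp_pos _
  nlinarith

set_option maxHeartbeats 1000000 in
theorem hermite_heat_lower_bound (d : ℕ) (hd : 1 ≤ d) (Cd α p : ℝ)
    (hCd : 0 < Cd) (hα : 0 < α) (hp : 1 < p)
    (E : ℝ → (EuclideanSpace ℝ (Fin d) → ℝ) → (EuclideanSpace ℝ (Fin d) → ℝ))
    (hker : ∀ t : ℝ, 0 < t → ∀ f : EuclideanSpace ℝ (Fin d) → ℝ,
      ∀ x : EuclideanSpace ℝ (Fin d),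
      E t f x = Cd * (Real.sinh (2 * t)) ^ (-(d : ℝ) / 2) *
        Real.exp (-(Real.tanh t / 2) * ‖x‖ ^ 2) *
        ∫ y : EuclideanSpace ℝ (Fin d),
          Real.exp (-‖x - y‖ ^ 2 / (2 * Real.sinh (2 * t))) *
            Real.exp (-(Real.tanh t / 2) * ‖y‖ ^ 2) * f y ∂volume) :
    ∃ C : ℝ, 0 < C ∧ ∃ t₀ : ℝ, 0 < t₀ ∧ ∀ t : ℝ, 0 < t → t < t₀ →
      ∀ x : EuclideanSpace ℝ (Fin d),
        Real.sqrt t / 2 ≤ ‖x‖ → ‖x‖ ≤ Real.sqrt t →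
          C * α * (-Real.log (4 * ‖x‖)) ^ (1 / p) ≤ E t (singularData α p) x := by
  haveI : Nonempty (Fin d) := ⟨⟨0, hd⟩⟩
  haveI : Nontrivial (EuclideanSpace ℝ (Fin d)) := inferInstance
  set z : ℝ := -(d : ℝ) / 2 with hz
  have hznonpos : z ≤ 0 := by
    rw [hz, neg_div]
    exact neg_nonpos.mpr (by positivity)
  set v : ℝ := (volume (Metric.ball (0 : EuclideanSpace ℝ (Fin d)) 1)).toReal with hv
  have hv0 : 0 < v := by
    rw [hv]
    refine ENNReal.toReal_pos ?_ measure_ball_lt_top.ne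
    exact (Metric.measure_ball_pos volume 0 one_pos).ne'
  refine ⟨Cd * Real.exp (-3) * v * ((6:ℝ) ^ z / 2^d), by positivity, 1/16, by norm_num, ?_⟩
  intro t ht ht16 x hx1 hx2
  have hst : 0 < Real.sqrt t := Real.sqrt_pos.mpr ht
  have hx0 : 0 < ‖x‖ := lt_of_lt_of_le (by positivity) hx1
  have hsqrt14 : Real.sqrt t < 1/4 := by
    have : Real.sqrt t < Real.sqrt (1/16) := by
      apply Real.sqrt_lt_sqrt ht.le ht16
    rwa [show (1/16 : ℝ) = (1/4)^2 by norm_num, Real.sqrt_sq (by norm_num)] at this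
  have hxlt : ‖x‖ < 1/4 := lt_of_le_of_lt hx2 hsqrt14
  have h4x : 4 * ‖x‖ < 1 := by linarith
  have hlog : 0 < -Real.log (4 * ‖x‖) :=
    neg_pos.mpr (Real.log_neg (by positivity) h4x)
  set L : ℝ := (-Real.log (4 * ‖x‖)) ^ (1/p) with hL
  have hL0 : 0 ≤ L := Real.rpow_nonneg hlog.le _
  have ht1 : t < 1 := by linarith
  have hsinh_pos : 0 < Real.sinh (2*t) := Real.sinh_pos_iff.mpr (by linarith)
  have hsinh_lb : 2*t ≤ Real.sinh (2*t) := (Real.self_lt_sinh_iff.mpr (by linarith)).le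
  have hsinh_ub : Real.sinh (2*t) ≤ 6*t := by
    have := sinh_le_three_mul (by linarith : (0:ℝ) ≤ 2*t) (by linarith)
    linarith
  have htanh0 : 0 ≤ Real.tanh t := by
    rw [Real.tanh_eq_sinh_div_cosh]
    exact div_nonneg (Real.sinh_nonneg_iff.mpr ht.le) (Real.cosh_pos t).le
  have htanh1 : Real.tanh t ≤ 1 := by
    rw [Real.tanh_eq_sinh_div_cosh]
    exact (div_le_one (Real.cosh_pos t)).mpr (Real.sinh_lt_cosh t).le
  rw [hker t ht _ x]
  have hu₀int := integrable_singularData d hd α p hα hp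
  set F : EuclideanSpace ℝ (Fin d) → ℝ := fun y =>
    Real.exp (-‖x - y‖ ^ 2 / (2 * Real.sinh (2 * t))) *
      Real.exp (-(Real.tanh t / 2) * ‖y‖ ^ 2) * singularData α p y with hF
  have hFnonneg : ∀ y, 0 ≤ F y := fun y =>
    mul_nonneg (mul_nonneg (Real.exp_pos _).le (Real.exp_pos _).le)
      (singularData_nonneg hα y)
  have hFmeas : Measurable F := by
    have h1 : Continuous fun y : EuclideanSpace ℝ (Fin d) =>
        Real.exp (-‖x - y‖ ^ 2 / (2 * Real.sinh (2 * t))) := by fun_prop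
    have h2 : Continuous fun y : EuclideanSpace ℝ (Fin d) =>
        Real.exp (-(Real.tanh t / 2) * ‖y‖ ^ 2) := by fun_prop
    exact (h1.measurable.mul h2.measurable).mul (measurable_singularData α p hp)
  have hFint : Integrable F := by
    refine hu₀int.mono' hFmeas.aestronglyMeasurable (ae_of_all _ fun y => ?_)
    rw [Real.norm_of_nonneg (hFnonneg y)]
    have he1 : Real.exp (-‖x - y‖ ^ 2 / (2 * Real.sinh (2 * t))) ≤ 1 := by
      apply Real.exp_le_one_iff.mpr
      apply div_nonpos_of_nonpos_of_nonneg
      · exact neg_nonpos.mpr (by positivity)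
      · linarith
    have he2 : Real.exp (-(Real.tanh t / 2) * ‖y‖ ^ 2) ≤ 1 := by
      apply Real.exp_le_one_iff.mpr
      apply mul_nonpos_of_nonpos_of_nonneg
      · simp only [neg_nonpos]; positivity
      · positivity
    have hu := singularData_nonneg (p := p) hα y
    calc Real.exp (-‖x - y‖ ^ 2 / (2 * Real.sinh (2 * t))) *
          Real.exp (-(Real.tanh t / 2) * ‖y‖ ^ 2) * singularData α p y
        ≤ 1 * 1 * singularData α p y := by
          apply mul_le_mul_of_nonneg_right _ hu
          exact mul_le_mul he1 he2 (Real.exp_pos _).le one_pos.le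
    _ = singularData α p y := by ring
  -- lower bound for the integral over the ball B = ball 0 ‖x‖
  set B := Metric.ball (0 : EuclideanSpace ℝ (Fin d)) ‖x‖ with hB
  set c0 : ℝ := Real.exp (-1) * Real.exp (-1) * (α * L) with hc0
  have hc00 : 0 ≤ c0 := by positivity
  have hstep2 : (volume B).toReal * c0 ≤ ∫ y in B, F y := by
    have hconst : ∫ (_ : EuclideanSpace ℝ (Fin d)) in B, c0 ∂volume
        = (volume B).toReal * c0 := by
      rw [setIntegral_const, smul_eq_mul]
      rfl
    rw [← hconst]
    have h0 : (volume : Measure (EuclideanSpace ℝ (Fin d))) {0} = 0 := measure_singleton 0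
    refine setIntegral_mono_on_ae
      (integrableOn_const measure_ball_lt_top.ne)
      hFint.integrableOn measurableSet_ball ?_
    filter_upwards [compl_mem_ae_iff.mpr h0] with y hy hyB
    have hy0 : y ≠ 0 := by simpa using hy
    have hyx : ‖y‖ < ‖x‖ := by
      simpa [hB, Metric.mem_ball, dist_zero_right] using hyB
    have hy0' : 0 < ‖y‖ := norm_pos_iff.mpr hy0
    -- first exponential
    have hxy : ‖x - y‖ ≤ 2 * Real.sqrt t := by
      calc ‖x - y‖ ≤ ‖x‖ + ‖y‖ := norm_sub_le x y
      _ ≤ 2 * Real.sqrt t := by linarith [hx2, hyx.le]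
    have hxy2 : ‖x - y‖ ^ 2 ≤ 4 * t := by
      have h := mul_self_le_mul_self (norm_nonneg (x - y)) hxy
      have hsq : Real.sqrt t * Real.sqrt t = t := Real.mul_self_sqrt ht.le
      nlinarith
    have he1 : Real.exp (-1) ≤ Real.exp (-‖x - y‖ ^ 2 / (2 * Real.sinh (2 * t))) := by
      apply Real.exp_le_exp.mpr
      rw [neg_div, neg_le_neg_iff, div_le_one (by linarith)]
      linarith
    have hy2t : ‖y‖ ^ 2 ≤ t := by
      have h := mul_self_le_mul_self (norm_nonneg y) (le_trans hyx.le hx2)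
      have hsq : Real.sqrt t * Real.sqrt t = t := Real.mul_self_sqrt ht.le
      nlinarith
    have he2 : Real.exp (-1) ≤ Real.exp (-(Real.tanh t / 2) * ‖y‖ ^ 2) := by
      apply Real.exp_le_exp.mpr
      have : (Real.tanh t / 2) * ‖y‖ ^ 2 ≤ 1 := by nlinarith
      nlinarith
    have hu : α * L ≤ singularData α p y := by
      have hylt : ‖y‖ < 1 := by linarith
      have hlogle : -Real.log (4 * ‖x‖) ≤ -Real.log ‖y‖ := by
        have := Real.log_le_log hy0' (by linarith : ‖y‖ ≤ 4 * ‖x‖)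
        linarith
      have : L ≤ (-Real.log ‖y‖) ^ (1/p) :=
        Real.rpow_le_rpow hlog.le hlogle (by positivity)
      unfold singularData
      rw [if_pos hylt]
      exact mul_le_mul_of_nonneg_left this hα.le
    calc c0 = Real.exp (-1) * Real.exp (-1) * (α * L) := rfl
    _ ≤ Real.exp (-‖x - y‖ ^ 2 / (2 * Real.sinh (2 * t))) *
          Real.exp (-(Real.tanh t / 2) * ‖y‖ ^ 2) * singularData α p y := by
        apply mul_le_mul _ hu (by positivity) _
        · exact mul_le_mul he1 he2 (Real.exp_pos _).le (Real.exp_pos _).le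
        · positivity
    _ = F y := rfl
  have hstep1 : ∫ y in B, F y ≤ ∫ y, F y :=
    setIntegral_le_integral hFint (ae_of_all _ hFnonneg)
  have hvol : (volume B).toReal = ‖x‖ ^ d * v := by
    rw [hB, Measure.addHaar_ball volume 0 (norm_nonneg x), ENNReal.toReal_mul,
      ENNReal.toReal_ofReal (by positivity), finrank_euclideanSpace_fin, hv]
  have hIlb : (Real.sqrt t / 2) ^ d * v * c0 ≤ ∫ y, F y := by
    calc (Real.sqrt t / 2) ^ d * v * c0 ≤ ‖x‖ ^ d * v * c0 := by
          apply mul_le_mul_of_nonneg_right _ hc00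
          apply mul_le_mul_of_nonneg_right _ hv0.le
          exact pow_le_pow_left₀ (by positivity) hx1 d
    _ = (volume B).toReal * c0 := by rw [hvol]
    _ ≤ ∫ y in B, F y := hstep2
    _ ≤ ∫ y, F y := hstep1
  -- bound the prefactors
  have hS : ((6:ℝ)*t) ^ z ≤ Real.sinh (2*t) ^ z :=
    Real.rpow_le_rpow_of_nonpos hsinh_pos hsinh_ub hznonpos
  have hW : Real.exp (-1) ≤ Real.exp (-(Real.tanh t / 2) * ‖x‖ ^ 2) := by
    apply Real.exp_le_exp.mpr
    have hx2t : ‖x‖ ^ 2 ≤ t := by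
      have h := mul_self_le_mul_self (norm_nonneg x) hx2
      have hsq : Real.sqrt t * Real.sqrt t = t := Real.mul_self_sqrt ht.le
      nlinarith
    nlinarith
  have hprefac : Cd * ((6:ℝ)*t) ^ z * Real.exp (-1)
      ≤ Cd * Real.sinh (2*t) ^ z * Real.exp (-(Real.tanh t / 2) * ‖x‖ ^ 2) := by
    have h1 : Cd * ((6:ℝ)*t) ^ z ≤ Cd * Real.sinh (2*t) ^ z :=
      mul_le_mul_of_nonneg_left hS hCd.le
    apply mul_le_mul h1 hW (Real.exp_pos _).le
    exact mul_nonneg hCd.le (Real.rpow_nonneg hsinh_pos.le _)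
  have hmain : Cd * ((6:ℝ)*t) ^ z * Real.exp (-1) * ((Real.sqrt t / 2) ^ d * v * c0)
      ≤ Cd * Real.sinh (2*t) ^ z * Real.exp (-(Real.tanh t / 2) * ‖x‖ ^ 2) * ∫ y, F y := by
    apply mul_le_mul hprefac hIlb (by positivity)
    have : (0:ℝ) ≤ Real.sinh (2*t) ^ z := Real.rpow_nonneg hsinh_pos.le _
    positivity
  -- identify the left side with C * α * L
  have hid : Cd * Real.exp (-3) * v * ((6:ℝ) ^ z / 2^d) * α * L
      = Cd * ((6:ℝ)*t) ^ z * Real.exp (-1) * ((Real.sqrt t / 2) ^ d * v * c0) := by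
    have h6 : ((6:ℝ)*t) ^ z = (6:ℝ) ^ z * t ^ z := Real.mul_rpow (by norm_num) ht.le
    have hsqd : (Real.sqrt t) ^ d = t ^ ((d:ℝ)/2) := by
      rw [← Real.rpow_natCast (Real.sqrt t) d, Real.sqrt_eq_rpow,
        ← Real.rpow_mul ht.le]
      norm_num
      ring_nf
    have htz : t ^ z * t ^ ((d:ℝ)/2) = 1 := by
      rw [← Real.rpow_add ht, hz]
      ring_nf
      exact Real.rpow_zero t
    have hexp : Real.exp (-3) = Real.exp (-1) * (Real.exp (-1) * Real.exp (-1)) := by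
      rw [← Real.exp_add, ← Real.exp_add]; norm_num
    have hdivpow : (Real.sqrt t / 2) ^ d = (Real.sqrt t) ^ d / 2 ^ d := div_pow _ _ _
    rw [hc0, h6, hdivpow, hsqd, hexp]
    linear_combination (-(Cd * (6:ℝ) ^ z * Real.exp (-1) * Real.exp (-1) * Real.exp (-1)
      * v * α * L) / 2 ^ d) * htz
  calc Cd * Real.exp (-3) * v * ((6:ℝ) ^ z / 2^d) * α * L
      = Cd * ((6:ℝ)*t) ^ z * Real.exp (-1) * ((Real.sqrt t / 2) ^ d * v * c0) := hid
  _ ≤ _ := hmain
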